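/- (Instability on the side of positive heat capacity at fixed angular momenta.) Take p = 1 and write X^1 = J (the angular momentum). Let φ : ℝ → E be a C^∞ curve and T, Y : ℝ → ℝ be C^∞ functions such that for every λ, φ(λ) satisfies the first law with temperature T(λ) and potential Y(λ), with T(0) > 0. Suppose the curve has fixed angular momentum, (J∘φ)′(λ) = 0 for all λ, and that there is a C¹ function c : ℝ → ℝ (the heat capacity at constant J) with (S∘φ)′(λ) = (c(λ)/T(λ))·T′(λ) for all λ near 0, satisfying c(0) = 0, T′(0) ≠ 0, and c′(0) > 0. Suppose further that φ′(0) ≠ 0 and there exists a continuous map ũ : ℝ → E with λ·DS_{φ(λ)}(ũ(λ)) = (S∘φ)′(λ) and λ·DJ_{φ(λ)}(ũ(λ)) = 0 for all λ near 0. Then there exists ε > 0 such that for all λ ∈ (0, ε) (the side of the turning point on which c(λ) > 0), the vector û(λ) := φ′(λ) − λ·ũ(λ) satisfies DM_{φ(λ)}(û(λ)) = DS_{φ(λ)}(û(λ)) = DJ_{φ(λ)}(û(λ)) = 0 and B_{φ(λ)}(û(λ), û(λ)) < 0; in particular φ(λ) is thermodynamically unstable for all λ ∈ (0, ε). -/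

import Mathlib

open Filter Topology

/-- The second Fréchet derivative of `f : E → ℝ` at `φ`, applied to `u`, `v`. -/
noncomputable def D2 {E : Type*} [NormedAddCommGroup E] [NormedSpace ℝ E]
    (f : E → ℝ) (φ u v : E) : ℝ :=
  fderiv ℝ (fderiv ℝ f) φ u v

/-- `φ` satisfies the first law with temperature `T` and potential `Y` (case `p = 1`,
`X¹ = J` the angular momentum): `DM_φ = T·DS_φ + Y·DJ_φ`. -/
def FirstLawJ {E : Type*} [NormedAddCommGroup E] [NormedSpace ℝ E]
    (M S J : E → ℝ) (φ : E) (T Y : ℝ) : Prop :=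
  fderiv ℝ M φ = T • fderiv ℝ S φ + Y • fderiv ℝ J φ

/-- The canonical bilinear form `B_φ(u,v) = D²M_φ(u,v) − T·D²S_φ(u,v) − Y·D²J_φ(u,v)`. -/
noncomputable def BformJ {E : Type*} [NormedAddCommGroup E] [NormedSpace ℝ E]
    (M S J : E → ℝ) (φ : E) (T Y : ℝ) (u v : E) : ℝ :=
  D2 M φ u v - T * D2 S φ u v - Y * D2 J φ u v

section Aux
variable {E : Type*} [NormedAddCommGroup E] [NormedSpace ℝ E]

lemma D2_symm' (f : E → ℝ) (hf : ContDiff ℝ (⊤ : ℕ∞) f) (φ u v : E) :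
    D2 f φ u v = D2 f φ v u := by
  have hdf : ∀ y, HasFDerivAt f (fderiv ℝ f y) y :=
    fun y => (hf.differentiable (by simp) y).hasFDerivAt
  have h2 : HasFDerivAt (fderiv ℝ f) (fderiv ℝ (fderiv ℝ f) φ) φ :=
    (((hf.fderiv_right (m := (⊤:ℕ∞)) (by exact_mod_cast le_top)).differentiable
      (by simp)) φ).hasFDerivAt
  exact second_derivative_symmetric hdf h2 u v

lemma D2_sub_smul' (f : E → ℝ) (φ a b v : E) (l : ℝ) :
    D2 f φ (a - l • b) v = D2 f φ a v - l * D2 f φ b v := by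
  simp [D2, map_sub, map_smul]

lemma keyderiv (M S J : E → ℝ)
    (hM : ContDiff ℝ (⊤ : ℕ∞) M) (hS : ContDiff ℝ (⊤ : ℕ∞) S) (hJ : ContDiff ℝ (⊤ : ℕ∞) J)
    (φ : ℝ → E) (hφ : ContDiff ℝ (⊤ : ℕ∞) φ)
    (T Y : ℝ → ℝ) (hT : ContDiff ℝ (⊤ : ℕ∞) T) (hY : ContDiff ℝ (⊤ : ℕ∞) Y)
    (hfl : ∀ x : ℝ, fderiv ℝ M (φ x) = T x • fderiv ℝ S (φ x) + Y x • fderiv ℝ J (φ x))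
    (l : ℝ) (v : E) :
    D2 M (φ l) (deriv φ l) v
      = deriv T l * fderiv ℝ S (φ l) v + T l * D2 S (φ l) (deriv φ l) v
        + deriv Y l * fderiv ℝ J (φ l) v + Y l * D2 J (φ l) (deriv φ l) v := by
  have hφd : HasDerivAt φ (deriv φ l) l :=
    ((hφ.differentiable (by simp)) l).hasDerivAt
  have hA : ∀ f : E → ℝ, ContDiff ℝ (⊤ : ℕ∞) f →
      HasDerivAt (fun x => fderiv ℝ f (φ x)) ((fderiv ℝ (fderiv ℝ f) (φ l)) (deriv φ l)) l := by
    intro f hf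
    have h1 : HasFDerivAt (fderiv ℝ f) (fderiv ℝ (fderiv ℝ f) (φ l)) (φ l) :=
      (((hf.fderiv_right (m := (⊤:ℕ∞)) (by exact_mod_cast le_top)).differentiable
        (by simp)) (φ l)).hasFDerivAt
    exact h1.comp_hasDerivAt l hφd
  have hTd : HasDerivAt T (deriv T l) l :=
    ((hT.differentiable (by simp)) l).hasDerivAt
  have hYd : HasDerivAt Y (deriv Y l) l :=
    ((hY.differentiable (by simp)) l).hasDerivAt
  have hRHS := (hTd.smul (hA S hS)).add (hYd.smul (hA J hJ))
  have hLHS := hA M hM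
  have heq : (fun x => fderiv ℝ M (φ x))
      = fun x => T x • fderiv ℝ S (φ x) + Y x • fderiv ℝ J (φ x) := funext fun x => hfl x
  rw [heq] at hLHS
  have hder := hLHS.unique hRHS
  have happ := congrArg (fun A : E →L[ℝ] ℝ => A v) hder
  simp only [ContinuousLinearMap.add_apply, ContinuousLinearMap.smul_apply, smul_eq_mul,
    D2] at happ ⊢
  linarith

end Aux

/-- Instability on the side of positive heat capacity at fixed angular
momenta: along a smooth fixed-`J` family of first-law solutions with heat capacity
`c(λ)` satisfying `(S∘φ)′ = (c/T)·T′`, `c(0) = 0`, `T′(0) ≠ 0`, `c′(0) > 0`, the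
solutions are thermodynamically unstable on the side `λ ∈ (0, ε)` where `c > 0`. -/
theorem instability_on_positive_heat_capacity_side
    {E : Type*} [NormedAddCommGroup E] [NormedSpace ℝ E] [CompleteSpace E]
    (M S J : E → ℝ)
    (hM : ContDiff ℝ (⊤ : ℕ∞) M) (hS : ContDiff ℝ (⊤ : ℕ∞) S)
    (hJ : ContDiff ℝ (⊤ : ℕ∞) J)
    (φ : ℝ → E) (hφ : ContDiff ℝ (⊤ : ℕ∞) φ)
    (T Y : ℝ → ℝ) (hT : ContDiff ℝ (⊤ : ℕ∞) T) (hY : ContDiff ℝ (⊤ : ℕ∞) Y)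
    (hfl : ∀ l : ℝ, FirstLawJ M S J (φ l) (T l) (Y l))
    (hT0 : 0 < T 0)
    (hJconst : ∀ l : ℝ, deriv (J ∘ φ) l = 0)
    (c : ℝ → ℝ) (hc : ContDiff ℝ 1 c)
    (hheat : ∀ᶠ l in 𝓝 (0 : ℝ), deriv (S ∘ φ) l = c l / T l * deriv T l)
    (hc0 : c 0 = 0) (hT'0 : deriv T 0 ≠ 0) (hc'0 : 0 < deriv c 0)
    (hφ'0 : deriv φ 0 ≠ 0)
    (u' : ℝ → E) (hu'cont : Continuous u')
    (hu' : ∀ᶠ l in 𝓝 (0 : ℝ),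
      l * fderiv ℝ S (φ l) (u' l) = deriv (S ∘ φ) l ∧
      l * fderiv ℝ J (φ l) (u' l) = 0) :
    ∃ ε > 0, ∀ l ∈ Set.Ioo (0 : ℝ) ε,
      fderiv ℝ M (φ l) (deriv φ l - l • u' l) = 0 ∧
      fderiv ℝ S (φ l) (deriv φ l - l • u' l) = 0 ∧
      fderiv ℝ J (φ l) (deriv φ l - l • u' l) = 0 ∧
      BformJ M S J (φ l) (T l) (Y l) (deriv φ l - l • u' l) (deriv φ l - l • u' l) < 0 := by
  have inftop : (1 : WithTop ℕ∞) ≤ ((⊤:ℕ∞) : WithTop ℕ∞) := by exact_mod_cast le_top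
  have hφd : ∀ x : ℝ, HasDerivAt φ (deriv φ x) x :=
    fun x => ((hφ.differentiable (by simp)) x).hasDerivAt
  have hchain : ∀ (f : E → ℝ), ContDiff ℝ (⊤:ℕ∞) f → ∀ x : ℝ,
      deriv (f ∘ φ) x = fderiv ℝ f (φ x) (deriv φ x) := fun f hf x =>
    (((hf.differentiable (by simp)) (φ x)).hasFDerivAt.comp_hasDerivAt x (hφd x)).deriv
  -- continuity of `g l = B(ũ(l), ũ(l))`
  have hD2cont : ∀ (f : E → ℝ), ContDiff ℝ (⊤:ℕ∞) f →
      Continuous (fun l => D2 f (φ l) (u' l) (u' l)) := by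
    intro f hf
    have h1 : Continuous (fderiv ℝ (fderiv ℝ f)) :=
      ((hf.fderiv_right (m := (⊤:ℕ∞)) (by exact_mod_cast le_top)).fderiv_right
        (m := (⊤:ℕ∞)) (by exact_mod_cast le_top)).continuous
    exact ((h1.comp hφ.continuous).clm_apply hu'cont).clm_apply hu'cont
  set g : ℝ → ℝ := fun l => BformJ M S J (φ l) (T l) (Y l) (u' l) (u' l) with hgdef
  have hgcont : Continuous g := by
    simp only [hgdef, BformJ]
    exact ((hD2cont M hM).sub (hT.continuous.mul (hD2cont S hS))).sub
      (hY.continuous.mul (hD2cont J hJ))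
  -- slope of `c` at `0`
  have hslope : Tendsto (fun l => c l / l) (𝓝[>] (0:ℝ)) (𝓝 (deriv c 0)) := by
    have h1 : HasDerivAt c (deriv c 0) 0 := ((hc.differentiable one_ne_zero) 0).hasDerivAt
    have h2 := hasDerivAt_iff_tendsto_slope.mp h1
    have h3 : 𝓝[>] (0:ℝ) ≤ 𝓝[≠] (0:ℝ) :=
      nhdsWithin_mono 0 (fun x hx => by simpa using ne_of_gt hx)
    refine (h2.mono_left h3).congr (fun l => ?_)
    simp [slope_def_field, hc0]
  have hT'cont : Continuous (deriv T) := (contDiff_infty_iff_deriv.mp hT).2.continuous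
  -- the comparison function `H`
  set H : ℝ → ℝ := fun l => -(deriv T l)^2 * (c l / l) / T l + l * g l with hHdef
  have hTt : Tendsto T (𝓝[>] (0:ℝ)) (𝓝 (T 0)) :=
    (hT.continuous.tendsto 0).mono_left nhdsWithin_le_nhds
  have hT't : Tendsto (fun l => -(deriv T l)^2) (𝓝[>] (0:ℝ)) (𝓝 (-(deriv T 0)^2)) :=
    (((hT'cont.pow 2).neg).tendsto 0).mono_left nhdsWithin_le_nhds
  have hgt : Tendsto (fun l => l * g l) (𝓝[>] (0:ℝ)) (𝓝 (0 * g 0)) :=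
    ((continuous_id.mul hgcont).tendsto 0).mono_left nhdsWithin_le_nhds
  have hHt : Tendsto H (𝓝[>] (0:ℝ)) (𝓝 (-(deriv T 0)^2 * deriv c 0 / T 0 + 0 * g 0)) :=
    ((hT't.mul hslope).div hTt (ne_of_gt hT0)).add hgt
  have hLneg : -(deriv T 0)^2 * deriv c 0 / T 0 + 0 * g 0 < 0 := by
    have h1 : 0 < (deriv T 0)^2 := by
      rcases (sq_nonneg (deriv T 0)).lt_or_eq with h | h
      · exact h
      · exact absurd (pow_eq_zero_iff (n := 2) (by norm_num) |>.mp h.symm) hT'0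
    have h2 : 0 < (deriv T 0)^2 * deriv c 0 / T 0 := div_pos (mul_pos h1 hc'0) hT0
    have h3 : -(deriv T 0)^2 * deriv c 0 / T 0 = -((deriv T 0)^2 * deriv c 0 / T 0) := by ring
    rw [h3]
    linarith
  have hHlt : ∀ᶠ l in 𝓝[>] (0:ℝ), H l < 0 := hHt.eventually_lt_const hLneg
  have hTpos : ∀ᶠ l in 𝓝[>] (0:ℝ), 0 < T l :=
    ((hT.continuous.tendsto 0).mono_left nhdsWithin_le_nhds).eventually_const_lt hT0
  have hev : ∀ᶠ l in 𝓝[>] (0:ℝ),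
      (deriv (S ∘ φ) l = c l / T l * deriv T l) ∧
      (l * fderiv ℝ S (φ l) (u' l) = deriv (S ∘ φ) l ∧ l * fderiv ℝ J (φ l) (u' l) = 0) ∧
      H l < 0 ∧ 0 < l ∧ 0 < T l := by
    filter_upwards [hheat.filter_mono nhdsWithin_le_nhds, hu'.filter_mono nhdsWithin_le_nhds,
      hHlt, self_mem_nhdsWithin, hTpos] with l h1 h2 h3 h4 h5
    exact ⟨h1, h2, h3, h4, h5⟩
  rcases mem_nhdsGT_iff_exists_Ioo_subset.mp hev with ⟨ε, hε, hsub⟩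
  refine ⟨ε, hε, fun l hl => ?_⟩
  obtain ⟨h1, ⟨h2S, h2J⟩, h3, h4, h5⟩ := hsub hl
  have hlne : l ≠ 0 := ne_of_gt h4
  have hTlne : T l ≠ 0 := ne_of_gt h5
  -- first derivatives vanish on `û`
  have hSv : fderiv ℝ S (φ l) (deriv φ l - l • u' l) = 0 := by
    rw [map_sub, map_smul, smul_eq_mul, ← hchain S hS l, h2S, sub_self]
  have hJv : fderiv ℝ J (φ l) (deriv φ l - l • u' l) = 0 := by
    have hJφ' : fderiv ℝ J (φ l) (deriv φ l) = 0 := by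
      rw [← hchain J hJ l]; exact hJconst l
    rw [map_sub, map_smul, smul_eq_mul, hJφ', h2J, sub_self]
  have hMv : fderiv ℝ M (φ l) (deriv φ l - l • u' l) = 0 := by
    have h : fderiv ℝ M (φ l) = T l • fderiv ℝ S (φ l) + Y l • fderiv ℝ J (φ l) := hfl l
    rw [h]
    simp [ContinuousLinearMap.add_apply, ContinuousLinearMap.smul_apply, hSv, hJv]
  refine ⟨hMv, hSv, hJv, ?_⟩
  -- the key identity `B(φ', w) = T' DS(w) + Y' DJ(w)`
  have hkey : ∀ w : E, BformJ M S J (φ l) (T l) (Y l) (deriv φ l) w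
      = deriv T l * fderiv ℝ S (φ l) w + deriv Y l * fderiv ℝ J (φ l) w := by
    intro w
    have hk := keyderiv M S J hM hS hJ φ hφ T Y hT hY (fun x => hfl x) l w
    simp only [BformJ]
    linarith
  have hBsub : ∀ a b w : E, BformJ M S J (φ l) (T l) (Y l) (a - l • b) w
      = BformJ M S J (φ l) (T l) (Y l) a w - l * BformJ M S J (φ l) (T l) (Y l) b w := by
    intro a b w; simp only [BformJ, D2_sub_smul']; ring
  have hBsymm : ∀ a b : E, BformJ M S J (φ l) (T l) (Y l) a b
      = BformJ M S J (φ l) (T l) (Y l) b a := by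
    intro a b
    simp only [BformJ, D2_symm' M hM (φ l) a b, D2_symm' S hS (φ l) a b,
      D2_symm' J hJ (φ l) a b]
  have eB : BformJ M S J (φ l) (T l) (Y l) (deriv φ l - l • u' l) (deriv φ l - l • u' l)
      = -(deriv T l * (l * fderiv ℝ S (φ l) (u' l)))
        - deriv Y l * (l * fderiv ℝ J (φ l) (u' l)) + l * (l * g l) := by
    rw [hBsub, hkey, hSv, hJv, hBsymm (u' l), hBsub, hkey]
    simp only [hgdef]
    ring
  have efin : BformJ M S J (φ l) (T l) (Y l) (deriv φ l - l • u' l) (deriv φ l - l • u' l)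
      = l * H l := by
    rw [eB, h2S, h1, h2J]
    simp only [hHdef]
    field_simp
    ring
  rw [efin]
  exact mul_neg_of_pos_of_neg h4 h3
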